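/- Let t, d, k be positive integers and m = 2^k. Let v₁, …, v_t be vectors in ℝ^d each with ℓ1-norm at most 1. Then there exists a partition of {1,…,t} into pairwise disjoint sets I₁, …, I_m such that for every p ∈ [m], the ℓ∞-norm of (∑_{i∈I_p} vᵢ − (1/m)·∑_{i=1}^t vᵢ) is at most ∑_{i=0}^{k−1} 2^{−i}, which is strictly less than 2. -/

import Mathlib

open Finset

lemma bf_aux {t d : ℕ} (a : Fin d → Fin t → ℝ)
    (ha : ∀ i, ∑ j, |a j i| ≤ 1) :
    ∀ n : ℕ, ∀ x : Fin t → ℝ, (∀ i, |x i| ≤ 1) →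
      (Finset.univ.filter (fun i => |x i| < 1)).card ≤ n →
      ∃ z : Fin t → ℝ, (∀ i, z i = 1 ∨ z i = -1) ∧
        (∀ i, |x i| = 1 → z i = x i) ∧
        (∀ j, |∑ i, a j i * (z i - x i)| ≤ 2) := by
  intro n
  induction n with
  | zero =>
    intro x hx hcard
    have hall : ∀ i, |x i| = 1 := by
      intro i
      by_contra h
      have hi : |x i| < 1 := lt_of_le_of_ne (hx i) h
      have : (Finset.univ.filter (fun i => |x i| < 1)).Nonempty :=
        ⟨i, by simp [hi]⟩
      have := Finset.card_pos.mpr this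
      omega
    refine ⟨x, fun i => ?_, fun i _ => rfl, fun j => by simp⟩
    rcases abs_eq (le_of_lt one_pos) |>.mp (hall i) with h | h
    · exact Or.inl h
    · exact Or.inr h
  | succ n ih =>
    intro x hx hcard
    by_cases hle : (Finset.univ.filter (fun i => |x i| < 1)).card ≤ n
    · exact ih x hx hle
    -- alive set
    set A : Finset (Fin t) := Finset.univ.filter (fun i => |x i| < 1) with hA
    have hAne : A.Nonempty := Finset.card_pos.mp (by omega)
    have hmemA : ∀ i, i ∈ A ↔ |x i| < 1 := by intro i; simp [hA]
    -- big rows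
    set B : Finset (Fin d) := Finset.univ.filter (fun j => 1 < ∑ i ∈ A, |a j i|) with hB
    have hmemB : ∀ j, j ∈ B ↔ 1 < ∑ i ∈ A, |a j i| := by intro j; simp [hB]
    have hBA : B.card < A.card := by
      have h1 : (B.card : ℝ) ≤ ∑ j ∈ B, ∑ i ∈ A, |a j i| := by
        calc (B.card : ℝ) = ∑ j ∈ B, (1:ℝ) := by simp
        _ ≤ _ := Finset.sum_le_sum (fun j hj => le_of_lt ((hmemB j).mp hj))
      have h2 : ∑ j ∈ B, ∑ i ∈ A, |a j i| ≤ ∑ j, ∑ i ∈ A, |a j i| :=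
        Finset.sum_le_sum_of_subset_of_nonneg (Finset.subset_univ B)
          (fun j _ _ => Finset.sum_nonneg fun i _ => abs_nonneg _)
      have h3 : ∑ j, ∑ i ∈ A, |a j i| ≤ (A.card : ℝ) := by
        rw [Finset.sum_comm]
        calc ∑ i ∈ A, ∑ j, |a j i| ≤ ∑ i ∈ A, (1:ℝ) :=
              Finset.sum_le_sum (fun i _ => ha i)
        _ = A.card := by simp
      by_cases hBe : B.Nonempty
      · have hstrict : (B.card : ℝ) < ∑ j ∈ B, ∑ i ∈ A, |a j i| := by
          calc (B.card : ℝ) = ∑ j ∈ B, (1:ℝ) := by simp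
          _ < _ := Finset.sum_lt_sum_of_nonempty hBe (fun j hj => (hmemB j).mp hj)
        exact_mod_cast hstrict.trans_le (h2.trans h3)
      · simp only [Finset.not_nonempty_iff_eq_empty] at hBe
        rw [hBe]
        simpa using Finset.card_pos.mpr hAne
    -- linear map and kernel element
    let f : ({i // i ∈ A} → ℝ) →ₗ[ℝ] ({j // j ∈ B} → ℝ) :=
      { toFun := fun u j => ∑ i, a j.1 i.1 * u i
        map_add' := fun u w => by
          funext j; simp [mul_add, Finset.sum_add_distrib]
        map_smul' := fun c u => by
          funext j; simp [Finset.mul_sum, mul_comm, mul_left_comm] }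
    have hfni : ¬ Function.Injective f := by
      intro hinj
      have := LinearMap.finrank_le_finrank_of_injective hinj
      rw [Module.finrank_fintype_fun_eq_card, Module.finrank_fintype_fun_eq_card,
        Fintype.card_coe, Fintype.card_coe] at this
      omega
    rw [Function.not_injective_iff] at hfni
    obtain ⟨u1, u2, hfu, hune⟩ := hfni
    set u : {i // i ∈ A} → ℝ := u1 - u2 with hu
    have hfu0 : f u = 0 := by rw [hu, map_sub, hfu, sub_self]
    have hu0 : u ≠ 0 := sub_ne_zero.mpr hune
    -- extend
    set ub : Fin t → ℝ := fun i => if h : i ∈ A then u ⟨i, h⟩ else 0 with hub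
    have hub_off : ∀ i, i ∉ A → ub i = 0 := fun i h => by simp [hub, h]
    have hubA : ∀ i, ub i ≠ 0 → i ∈ A := by
      intro i h; by_contra hi; exact h (hub_off i hi)
    set supp : Finset (Fin t) := Finset.univ.filter (fun i => ub i ≠ 0) with hsupp
    have hsupp_ne : supp.Nonempty := by
      obtain ⟨i, hi⟩ := Function.ne_iff.mp hu0
      refine ⟨i.1, ?_⟩
      simp only [hsupp, Finset.mem_filter, Finset.mem_univ, true_and]
      rw [hub]
      simpa [dif_pos i.2] using hi
    have hmemsupp : ∀ i, i ∈ supp ↔ ub i ≠ 0 := fun i => by simp [hsupp]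
    -- step sizes
    set dd : Fin t → ℝ := fun i => if 0 < ub i then (1 - x i) / ub i else (-1 - x i) / ub i
      with hdd
    have hd_nonneg : ∀ i ∈ supp, 0 ≤ dd i := by
      intro i hi
      have hiu := (hmemsupp i).mp hi
      have hxi : |x i| < 1 := (hmemA i).mp (hubA i hiu)
      rw [abs_lt] at hxi
      have hddi : dd i = if 0 < ub i then (1 - x i) / ub i else (-1 - x i) / ub i := rfl
      rw [hddi]
      rcases lt_or_gt_of_ne hiu with hneg | hpos
      · rw [if_neg (by linarith)]
        rw [div_nonneg_iff]
        exact Or.inr ⟨by linarith, le_of_lt hneg⟩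
      · rw [if_pos hpos]
        exact div_nonneg (by linarith) (le_of_lt hpos)
    have hd_end : ∀ i ∈ supp, |x i + dd i * ub i| = 1 := by
      intro i hi
      have hiu := (hmemsupp i).mp hi
      have hddi : dd i = if 0 < ub i then (1 - x i) / ub i else (-1 - x i) / ub i := rfl
      rw [hddi]
      rcases lt_or_gt_of_ne hiu with hneg | hpos
      · rw [if_neg (by linarith), div_mul_cancel₀ _ hiu]
        norm_num
      · rw [if_pos hpos, div_mul_cancel₀ _ hiu]
        norm_num
    obtain ⟨i0, hi0s, hi0min⟩ := Finset.exists_min_image supp dd hsupp_ne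
    set lam : ℝ := dd i0 with hlam
    have hlam0 : 0 ≤ lam := hd_nonneg i0 hi0s
    set x' : Fin t → ℝ := fun i => x i + lam * ub i with hx'def
    have hx'_off : ∀ i, i ∉ supp → x' i = x i := by
      intro i hi
      have : ub i = 0 := by
        by_contra h; exact hi ((hmemsupp i).mpr h)
      simp [hx'def, this]
    have hx'le : ∀ i, |x' i| ≤ 1 := by
      intro i
      by_cases hi : i ∈ supp
      · have hiu := (hmemsupp i).mp hi
        have hxi : |x i| < 1 := (hmemA i).mp (hubA i hiu)
        rw [abs_lt] at hxi
        have hlamle : lam ≤ dd i := hi0min i hi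
        have hend := hd_end i hi
        rw [abs_le]
        rcases lt_or_gt_of_ne hiu with hneg | hpos
        · have h1 : dd i * ub i ≤ lam * ub i := by
            exact mul_le_mul_of_nonpos_right hlamle (le_of_lt hneg)
          have h2 : lam * ub i ≤ 0 := mul_nonpos_of_nonneg_of_nonpos hlam0 (le_of_lt hneg)
          have hde : x i + dd i * ub i = -1 ∨ x i + dd i * ub i = 1 := by
            rcases abs_eq (by norm_num : (0:ℝ) ≤ 1) |>.mp hend with h | h
            · right; exact h
            · left; exact h
          have hdege : -1 ≤ x i + dd i * ub i := by
            rcases hde with h | h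
            · rw [h]
            · rw [h]; norm_num
          constructor
          · simp only [hx'def]; linarith
          · simp only [hx'def]; linarith
        · have h1 : lam * ub i ≤ dd i * ub i :=
            mul_le_mul_of_nonneg_right hlamle (le_of_lt hpos)
          have h2 : 0 ≤ lam * ub i := mul_nonneg hlam0 (le_of_lt hpos)
          have hdele : x i + dd i * ub i ≤ 1 := by
            rcases abs_eq (by norm_num : (0:ℝ) ≤ 1) |>.mp hend with h | h
            · rw [h]
            · rw [h]; norm_num
          constructor
          · simp only [hx'def]; linarith
          · simp only [hx'def]; linarith
      · rw [hx'_off i hi]; exact hx i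
    -- new alive set strictly smaller
    have hi0A : i0 ∈ A := hubA i0 ((hmemsupp i0).mp hi0s)
    have hsubset : (Finset.univ.filter (fun i => |x' i| < 1)) ⊆ A.erase i0 := by
      intro i hi
      simp only [Finset.mem_filter, Finset.mem_univ, true_and] at hi
      rw [Finset.mem_erase]
      constructor
      · rintro rfl
        have : |x' i| = 1 := by
          have := hd_end i hi0s
          simpa [hx'def, hlam] using this
        rw [this] at hi; exact lt_irrefl _ hi
      · rw [hmemA]
        by_cases his : i ∈ supp
        · exact (hmemA i).mp (hubA i ((hmemsupp i).mp his))
        · rwa [hx'_off i his] at hi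
    have hcard' : (Finset.univ.filter (fun i => |x' i| < 1)).card ≤ n := by
      have h1 := Finset.card_le_card hsubset
      have h2 := Finset.card_erase_of_mem hi0A
      omega
    obtain ⟨z, hz1, hz2, hz3⟩ := ih x' hx'le hcard'
    have hzx : ∀ i, |x i| = 1 → z i = x i := by
      intro i hxi
      have hiA : i ∉ A := by rw [hmemA]; rw [hxi]; exact lt_irrefl 1
      have hix' : x' i = x i := by simp [hx'def, hub_off i hiA]
      rw [hz2 i (by rw [hix']; exact hxi), hix']
    refine ⟨z, hz1, hzx, ?_⟩
    intro j
    by_cases hjB : j ∈ B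
    · -- big row: unchanged in this step
      have hker : ∑ i, a j i * ub i = 0 := by
        have h0 : ∑ i, a j i * ub i = ∑ i ∈ A, a j i * ub i := by
          rw [← Finset.sum_subset (Finset.subset_univ A)]
          intro i _ hiA
          rw [hub_off i hiA, mul_zero]
        have h1 : ∑ i ∈ A, a j i * ub i = ∑ i : {i // i ∈ A}, a j i.1 * u i := by
          rw [← Finset.sum_coe_sort A (fun i => a j i * ub i)]
          refine Finset.sum_congr rfl (fun i _ => ?_)
          simp [hub, dif_pos i.2]
        have h2 : ∑ i : {i // i ∈ A}, a j i.1 * u i = 0 := by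
          have := congrFun hfu0 ⟨j, hjB⟩
          simpa [f] using this
        rw [h0, h1, h2]
      have heq : ∑ i, a j i * (z i - x i)
          = ∑ i, a j i * (z i - x' i) + lam * ∑ i, a j i * ub i := by
        rw [Finset.mul_sum, ← Finset.sum_add_distrib]
        refine Finset.sum_congr rfl (fun i _ => ?_)
        simp only [hx'def]; ring
      rw [heq, hker, mul_zero, add_zero]
      exact hz3 j
    · -- small row: direct bound
      have hsj : ∑ i ∈ A, |a j i| ≤ 1 := by
        have := (hmemB j).not.mp hjB
        linarith [not_lt.mp this]
      calc |∑ i, a j i * (z i - x i)| ≤ ∑ i, |a j i * (z i - x i)| :=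
            Finset.abs_sum_le_sum_abs _ _
      _ = ∑ i, |a j i| * |z i - x i| := by
          refine Finset.sum_congr rfl (fun i _ => abs_mul _ _)
      _ = ∑ i ∈ A, |a j i| * |z i - x i| := by
          rw [← Finset.sum_subset (Finset.subset_univ A)]
          intro i _ hiA
          have hxi : |x i| = 1 := le_antisymm (hx i) (not_lt.mp ((hmemA i).not.mp hiA))
          rw [hzx i hxi]; simp
      _ ≤ ∑ i ∈ A, |a j i| * 2 := by
          refine Finset.sum_le_sum (fun i _ => ?_)
          refine mul_le_mul_of_nonneg_left ?_ (abs_nonneg _)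
          have h1 : |z i| ≤ 1 := by rcases hz1 i with h | h <;> simp [h]
          calc |z i - x i| ≤ |z i| + |x i| := abs_sub _ _
          _ ≤ 2 := by linarith [hx i]
      _ = (∑ i ∈ A, |a j i|) * 2 := by rw [Finset.sum_mul]
      _ ≤ 2 := by linarith
lemma halving {t d : ℕ} (v : Fin t → Fin d → ℝ) (hv : ∀ i, ∑ j, |v i j| ≤ 1)
    (T : Finset (Fin t)) :
    ∃ S : Finset (Fin t), S ⊆ T ∧
      ∀ j, |(∑ i ∈ S, v i j) - (1/2) * ∑ i ∈ T, v i j| ≤ 1 := by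
  set x : Fin t → ℝ := fun i => if i ∈ T then 0 else 1 with hxdef
  have hx : ∀ i, |x i| ≤ 1 := by
    intro i
    by_cases h : i ∈ T <;> simp [hxdef, h]
  obtain ⟨z, hz1, hz2, hz3⟩ := bf_aux (fun j i => v i j) hv t x hx
    ((Finset.card_filter_le _ _).trans (by simp))
  refine ⟨T.filter (fun i => z i = 1), Finset.filter_subset _ _, ?_⟩
  intro j
  have key : ∑ i, v i j * (z i - x i) = ∑ i ∈ T, v i j * z i := by
    rw [← Finset.sum_subset (Finset.subset_univ T)]
    · refine Finset.sum_congr rfl (fun i hi => by simp [hxdef, hi])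
    · intro i _ hiT
      have hxi : |x i| = 1 := by simp [hxdef, hiT]
      rw [hz2 i hxi]
      simp
  have split : ∑ i ∈ T, v i j * z i
      = 2 * (∑ i ∈ T.filter (fun i => z i = 1), v i j) - ∑ i ∈ T, v i j := by
    rw [← Finset.sum_filter_add_sum_filter_not T (fun i => z i = 1) (fun i => v i j * z i),
      ← Finset.sum_filter_add_sum_filter_not T (fun i => z i = 1) (fun i => v i j)]
    have h1 : ∑ i ∈ T.filter (fun i => z i = 1), v i j * z i
        = ∑ i ∈ T.filter (fun i => z i = 1), v i j := by
      refine Finset.sum_congr rfl (fun i hi => ?_)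
      rw [(Finset.mem_filter.mp hi).2]; ring
    have h2 : ∑ i ∈ T.filter (fun i => ¬ z i = 1), v i j * z i
        = -∑ i ∈ T.filter (fun i => ¬ z i = 1), v i j := by
      rw [← Finset.sum_neg_distrib]
      refine Finset.sum_congr rfl (fun i hi => ?_)
      have := (Finset.mem_filter.mp hi).2
      rcases hz1 i with h | h
      · exact absurd h this
      · rw [h]; ring
    rw [h1, h2]; ring
  have hb := hz3 j
  rw [key, split] at hb
  have heq2 : (∑ i ∈ T.filter (fun i => z i = 1), v i j) - 1/2 * ∑ i ∈ T, v i j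
      = (1/2) * (2 * (∑ i ∈ T.filter (fun i => z i = 1), v i j) - ∑ i ∈ T, v i j) := by
    ring
  rw [heq2, abs_mul, abs_of_nonneg (by norm_num : (0:ℝ) ≤ 1/2)]
  linarith
lemma bsum_succ (k : ℕ) :
    ∑ i ∈ Finset.range (k+1), (2:ℝ) ^ (-(i:ℤ))
      = 1 + (1/2) * ∑ i ∈ Finset.range k, (2:ℝ) ^ (-(i:ℤ)) := by
  rw [Finset.sum_range_succ']
  have h : ∀ i : ℕ, (2:ℝ) ^ (-((i+1:ℕ):ℤ)) = (1/2) * (2:ℝ) ^ (-(i:ℤ)) := by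
    intro i
    have : (-((i+1:ℕ):ℤ)) = (-(i:ℤ)) + (-1) := by push_cast; ring
    rw [this, zpow_add₀ (two_ne_zero : (2:ℝ) ≠ 0)]
    norm_num
    ring
  simp only [h]
  rw [← Finset.mul_sum]
  norm_num
  ring

lemma bsum_lt (k : ℕ) : ∑ i ∈ Finset.range k, (2:ℝ) ^ (-(i:ℤ)) < 2 := by
  induction k with
  | zero => norm_num
  | succ k ih => rw [bsum_succ]; linarith

lemma iter {t d : ℕ} (v : Fin t → Fin d → ℝ) (hv : ∀ i, ∑ j, |v i j| ≤ 1) :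
    ∀ k : ℕ, ∃ I : Fin (2 ^ k) → Finset (Fin t),
      (∀ i : Fin t, ∃! p : Fin (2 ^ k), i ∈ I p) ∧
      (∀ (p : Fin (2 ^ k)) (j : Fin d),
        |(∑ i ∈ I p, v i j) - (1 / (2 ^ k : ℝ)) * ∑ i, v i j|
          ≤ ∑ i ∈ Finset.range k, (2 : ℝ) ^ (-(i : ℤ))) := by
  intro k
  induction k with
  | zero =>
    refine ⟨fun _ => Finset.univ, fun i => ⟨⟨0, by norm_num⟩, by simp, ?_⟩, ?_⟩
    · intro p _
      have hp : (p:ℕ) < 1 := by simpa using p.isLt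
      exact Fin.ext (by omega)
    · intro p j
      simp
  | succ k ih =>
    obtain ⟨I, hpart, hbd⟩ := ih
    choose S hS hSb using fun p => halving v hv (I p)
    have h2k : 0 < 2 ^ k := Nat.pow_pos (by norm_num)
    have hpow : 2 ^ (k+1) = 2 ^ k * 2 := pow_succ 2 k
    set q : Fin (2^(k+1)) → Fin (2^k) := fun p => ⟨(p:ℕ) % 2^k, Nat.mod_lt _ h2k⟩ with hq
    set J : Fin (2^(k+1)) → Finset (Fin t) :=
      fun p => if (p:ℕ) < 2^k then S (q p) else I (q p) \ S (q p) with hJ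
    have hJI : ∀ p i, i ∈ J p → i ∈ I (q p) := by
      intro p i hi
      simp only [hJ] at hi
      by_cases h : (p:ℕ) < 2^k
      · rw [if_pos h] at hi; exact hS (q p) hi
      · rw [if_neg h] at hi; exact (Finset.mem_sdiff.mp hi).1
    refine ⟨J, ?_, ?_⟩
    · intro i
      obtain ⟨p0, hp0, hp0u⟩ := hpart i
      by_cases hiS : i ∈ S p0
      · refine ⟨⟨(p0:ℕ), by omega⟩, ?_, ?_⟩
        · have hqp : q ⟨(p0:ℕ), by omega⟩ = p0 :=
            Fin.ext (by simp [hq, Nat.mod_eq_of_lt p0.isLt])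
          simp only [hJ]
          rw [if_pos (by simpa using p0.isLt), hqp]
          exact hiS
        · intro p' hp'
          have hqI : q p' = p0 := hp0u (q p') (hJI p' i hp')
          have hlt : (p':ℕ) < 2^k := by
            by_contra h
            simp only [hJ] at hp'
            rw [if_neg h, hqI] at hp'
            exact (Finset.mem_sdiff.mp hp').2 hiS
          refine Fin.ext ?_
          have : ((q p' : Fin (2^k)) : ℕ) = (p0:ℕ) := congrArg Fin.val hqI
          simp only [hq] at this
          simpa [Nat.mod_eq_of_lt hlt] using this
      · refine ⟨⟨(p0:ℕ) + 2^k, by omega⟩, ?_, ?_⟩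
        · have hqp : q ⟨(p0:ℕ) + 2^k, by omega⟩ = p0 :=
            Fin.ext (by simp [hq, Nat.add_mod_right, Nat.mod_eq_of_lt p0.isLt])
          simp only [hJ]
          rw [if_neg (by simp), hqp]
          exact Finset.mem_sdiff.mpr ⟨hp0, hiS⟩
        · intro p' hp'
          have hqI : q p' = p0 := hp0u (q p') (hJI p' i hp')
          have hlt : ¬ (p':ℕ) < 2^k := by
            intro h
            simp only [hJ] at hp'
            rw [if_pos h, hqI] at hp'
            exact hiS hp'
          refine Fin.ext ?_
          have : ((q p' : Fin (2^k)) : ℕ) = (p0:ℕ) := congrArg Fin.val hqI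
          simp only [hq] at this
          have hp'lt := p'.isLt
          have hmod : (p':ℕ) % 2^k = (p':ℕ) - 2^k := by
            rw [Nat.mod_eq_sub_mod (by omega), Nat.mod_eq_of_lt (by omega)]
          simp only [hmod] at this
          simp only []
          omega
    · intro p j
      have key : |(∑ i ∈ J p, v i j) - (1/2) * ∑ i ∈ I (q p), v i j| ≤ 1 := by
        simp only [hJ]
        by_cases h : (p:ℕ) < 2^k
        · rw [if_pos h]; exact hSb (q p) j
        · rw [if_neg h]
          rw [Finset.sum_sdiff_eq_sub (hS (q p))]
          have : (∑ i ∈ I (q p), v i j) - (∑ i ∈ S (q p), v i j)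
              - (1/2) * ∑ i ∈ I (q p), v i j
              = -((∑ i ∈ S (q p), v i j) - (1/2) * ∑ i ∈ I (q p), v i j) := by ring
          rw [this, abs_neg]
          exact hSb (q p) j
      have harith : (1 / (2 ^ (k+1) : ℝ)) * ∑ i, v i j
          = (1/2) * ((1 / (2^k:ℝ)) * ∑ i, v i j) := by
        have h0 : ((2:ℝ)^k) ≠ 0 := by positivity
        rw [pow_succ, mul_comm ((2:ℝ)^k) 2]
        rw [one_div, mul_inv, ← one_div, ← one_div]
        ring
      rw [bsum_succ]
      calc |(∑ i ∈ J p, v i j) - (1 / (2 ^ (k+1) : ℝ)) * ∑ i, v i j|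
          ≤ |(∑ i ∈ J p, v i j) - (1/2) * ∑ i ∈ I (q p), v i j|
            + |(1/2) * ∑ i ∈ I (q p), v i j - (1 / (2 ^ (k+1) : ℝ)) * ∑ i, v i j| :=
            abs_sub_le _ _ _
        _ ≤ 1 + (1/2) * ∑ i ∈ Finset.range k, (2:ℝ) ^ (-(i:ℤ)) := by
            refine add_le_add key ?_
            rw [harith, ← mul_sub, abs_mul, abs_of_nonneg (by norm_num : (0:ℝ) ≤ 1/2)]
            exact mul_le_mul_of_nonneg_left (hbd (q p) j) (by norm_num)

/-- Iterated Beck–Fiala rounding: vectors of ℓ1-norm at most 1 can be partitioned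
into `m = 2^k` classes, each of which captures a `1/m` fraction of the total sum
up to ℓ∞-error `∑_{i=0}^{k-1} 2^{-i} < 2`. -/
theorem iterated_beck_fiala (t d k : ℕ) (ht : 0 < t) (hd : 0 < d) (hk : 0 < k)
    (v : Fin t → Fin d → ℝ) (hv : ∀ i, ∑ j, |v i j| ≤ 1) :
    ∃ I : Fin (2 ^ k) → Finset (Fin t),
      (∀ i : Fin t, ∃! p : Fin (2 ^ k), i ∈ I p) ∧
      (∀ (p : Fin (2 ^ k)) (j : Fin d),
        |(∑ i ∈ I p, v i j) - (1 / (2 ^ k : ℝ)) * ∑ i, v i j|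
          ≤ ∑ i ∈ Finset.range k, (2 : ℝ) ^ (-(i : ℤ))) ∧
      (∑ i ∈ Finset.range k, (2 : ℝ) ^ (-(i : ℤ))) < 2 := by
  obtain ⟨I, h1, h2⟩ := iter v hv k
  exact ⟨I, h1, h2, bsum_lt k⟩
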